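/- Let δ ≥ 0 and let Z_a ≅ [0,R]×S¹ be the finite glued cylinder. There exists a constant C > 0, independent of the gluing parameter a (with 0 < |a| < 1/2), such that |e^{−δ|s−R/2|}·q|_{L^∞(Z_a)} ≤ C·⦀q⦀_{2,−δ} for all q ∈ H²(Z_a, ℝ), where ⦀q⦀²_{2,−δ} = Σ_{|α|≤2} ∫_{[0,R]×S¹} |D^α q|² e^{−2δ|s−R/2|} ds dt. -/

import Mathlib

open Filter MeasureTheory

noncomputable section

/-- square of the weighted Sobolev norm `⦀q⦀²_{k,−δ}` on the finite glued cylinder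
`Z_a ≅ [0,R] × S¹` (functions on `ℝ²`, 1-periodic in the second variable), with weight
`e^{−2δ|s − R/2|}` -/
def zNormSq (k : ℕ) (δ R : ℝ) (q : ℝ × ℝ → ℝ) : ℝ :=
  ∑ j ∈ Finset.range (k + 1),
    ∫ x in Set.Ioo (0 : ℝ) R ×ˢ Set.Ioo (0 : ℝ) 1,
      ‖iteratedFDeriv ℝ j q x‖ ^ 2 * Real.exp (-2 * δ * |x.1 - R / 2|)

/-- membership in `H^k(Z_a)` (smooth representatives with finite weighted integrals) -/
def memZ (k : ℕ) (δ R : ℝ) (q : ℝ × ℝ → ℝ) : Prop :=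
  ContDiff ℝ (k : ℕ∞) q ∧ (∀ s t : ℝ, q (s, t + 1) = q (s, t)) ∧
    ∀ j ≤ k, IntegrableOn
      (fun x => ‖iteratedFDeriv ℝ j q x‖ ^ 2 * Real.exp (-2 * δ * |x.1 - R / 2|))
      (Set.Ioo (0 : ℝ) R ×ˢ Set.Ioo (0 : ℝ) 1)

/-- elementary 1D Sobolev-type bound via FTC:
`f x ² ≤ f y ² + ∫_(α,β) (f² + f'²)` for `x y ∈ [α,β]`. -/
private lemma oneD {f f' : ℝ → ℝ} (hd : ∀ z, HasDerivAt f (f' z) z) (hc : Continuous f')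
    {α β x y : ℝ} (hx : x ∈ Set.Icc α β) (hy : y ∈ Set.Icc α β) :
    f x ^ 2 ≤ f y ^ 2 + ∫ σ in Set.Ioo α β, (f σ ^ 2 + f' σ ^ 2) := by
  have hfc : Continuous f := continuous_iff_continuousAt.2 fun z => (hd z).continuousAt
  have hG : Continuous fun σ => (2 : ℝ) * f σ * f' σ := (continuous_const.mul hfc).mul hc
  have key : ∫ σ in y..x, 2 * f σ * f' σ = f x ^ 2 - f y ^ 2 := by
    refine intervalIntegral.integral_eq_sub_of_hasDerivAt (f := fun σ => f σ ^ 2)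
      (fun σ _ => ?_) (hG.intervalIntegrable y x)
    have h := (hd σ).pow 2
    norm_num at h
    exact h
  have h1 : f x ^ 2 - f y ^ 2 ≤ |∫ σ in y..x, 2 * f σ * f' σ| := key ▸ le_abs_self _
  have h2 : |∫ σ in y..x, 2 * f σ * f' σ| ≤ ∫ σ in Set.Ioo α β, |2 * f σ * f' σ| := by
    rw [← Real.norm_eq_abs]
    refine (intervalIntegral.norm_integral_le_integral_norm_uIoc).trans ?_
    have hsub : Set.uIoc y x ⊆ Set.Ioc α β := by
      intro z hz
      rcases hz with ⟨h1', h2'⟩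
      exact ⟨lt_of_le_of_lt (le_min hy.1 hx.1) h1', h2'.trans (max_le hy.2 hx.2)⟩
    calc ∫ σ in Set.uIoc y x, ‖2 * f σ * f' σ‖
        ≤ ∫ σ in Set.Ioc α β, ‖2 * f σ * f' σ‖ := by
          refine setIntegral_mono_set (hG.norm.integrableOn_Ioc) ?_ (ae_of_all _ hsub)
          exact ae_of_all _ fun z => norm_nonneg _
      _ = ∫ σ in Set.Ioo α β, |2 * f σ * f' σ| := by
          rw [integral_Ioc_eq_integral_Ioo]
          simp only [Real.norm_eq_abs]
  have h3 : (∫ σ in Set.Ioo α β, |2 * f σ * f' σ|)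
      ≤ ∫ σ in Set.Ioo α β, (f σ ^ 2 + f' σ ^ 2) := by
    refine setIntegral_mono_on
      ((hG.abs.integrableOn_Icc).mono_set Set.Ioo_subset_Icc_self)
      ((((hfc.pow 2).add (hc.pow 2)).integrableOn_Icc).mono_set Set.Ioo_subset_Icc_self)
      measurableSet_Ioo (fun z _ => ?_)
    have h := sq_nonneg (|f z| - |f' z|)
    rw [abs_mul, abs_mul, abs_two]
    nlinarith [abs_nonneg (f z), abs_nonneg (f' z), sq_abs (f z), sq_abs (f' z)]
  linarith

set_option maxHeartbeats 2000000 in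
theorem weighted_sup_bound_on_glued_cylinder (δ : ℝ) (hδ : 0 ≤ δ) :
    ∃ C : ℝ, 0 < C ∧
      ∀ a : ℂ, 0 < ‖a‖ → ‖a‖ < 1 / 2 →
      ∀ R : ℝ, R = Real.exp (1 / ‖a‖) - Real.exp 1 →
      ∀ q : ℝ × ℝ → ℝ, memZ 2 δ R q →
      ∀ s t : ℝ, s ∈ Set.Icc (0 : ℝ) R →
        Real.exp (-δ * |s - R / 2|) * |q (s, t)| ≤ C * Real.sqrt (zNormSq 2 δ R q) := by
  refine ⟨Real.sqrt (14 * Real.exp δ), Real.sqrt_pos.2 (by positivity), ?_⟩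
  intro a ha ha2 R hR q hq s t hs
  obtain ⟨hq2, hper, hint⟩ := hq
  -- R is large
  have hRhalf : (1 : ℝ) / 2 ≤ R := by
    have h2a : (2 : ℝ) ≤ 1 / ‖a‖ := by
      rw [le_div_iff₀ ha]; linarith
    have he2 : Real.exp 2 ≤ Real.exp (1 / ‖a‖) := Real.exp_le_exp.2 h2a
    have h1 : Real.exp 1 < 2.7182818286 := Real.exp_one_lt_d9
    have h2 : (2.7182818283 : ℝ) < Real.exp 1 := Real.exp_one_gt_d9
    have hee : Real.exp 2 = Real.exp 1 * Real.exp 1 := by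
      rw [← Real.exp_add]; norm_num
    nlinarith
  -- the strip
  set r : ℝ := min s (R - 1 / 2) with hr
  have hr0 : 0 ≤ r := le_min hs.1 (by linarith)
  have hrs : r ≤ s := min_le_left _ _
  have hsr : s ≤ r + 1 / 2 := by
    rcases le_total s (R - 1 / 2) with h | h
    · rw [hr, min_eq_left h]; linarith
    · rw [hr, min_eq_right h]; linarith [hs.2]
  have hrR : r + 1 / 2 ≤ R := by
    have := min_le_right s (R - 1 / 2); linarith
  set I : Set ℝ := Set.Ioo r (r + 1 / 2) with hI
  set J : Set ℝ := Set.Ioo (0 : ℝ) 1 with hJ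
  set S : Set (ℝ × ℝ) := I ×ˢ J with hS
  set Ω : Set (ℝ × ℝ) := Set.Ioo (0 : ℝ) R ×ˢ J with hΩ
  have hSΩ : S ⊆ Ω := by
    refine Set.prod_mono (fun z hz => ?_) (fun z hz => hz)
    exact ⟨lt_of_le_of_lt hr0 hz.1, lt_of_lt_of_le hz.2 hrR⟩
  -- derivative functions
  set u₁ : ℝ × ℝ → ℝ := fun x => fderiv ℝ q x (1, 0) with hu₁
  set u₂ : ℝ × ℝ → ℝ := fun x => fderiv ℝ q x (0, 1) with hu₂
  set u₁₂ : ℝ × ℝ → ℝ := fun x => fderiv ℝ u₂ x (1, 0) with hu₁₂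
  have hqd : Differentiable ℝ q := hq2.differentiable (by norm_num)
  have hq1 : ContDiff ℝ 1 (fderiv ℝ q) := hq2.fderiv_right (by norm_num)
  have hu2cd : ContDiff ℝ 1 u₂ := hq1.clm_apply contDiff_const
  have hu2d : Differentiable ℝ u₂ := hu2cd.differentiable (by norm_num)
  -- continuity
  have hcq : Continuous q := hq2.continuous
  have hcfd : Continuous (fderiv ℝ q) := hq2.continuous_fderiv (by norm_num)
  have hcu1 : Continuous u₁ := hcfd.clm_apply continuous_const
  have hcu2 : Continuous u₂ := hcfd.clm_apply continuous_const
  have hcu12 : Continuous u₁₂ := (hu2cd.continuous_fderiv (by norm_num)).clm_apply continuous_const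
  -- slice derivatives
  have hderiv_s : ∀ (g : ℝ × ℝ → ℝ), Differentiable ℝ g → ∀ (τ σ : ℝ),
      HasDerivAt (fun σ' => g (σ', τ)) (fderiv ℝ g (σ, τ) (1, 0)) σ := by
    intro g hg τ σ
    have h1 : HasDerivAt (fun σ' : ℝ => (σ', τ)) ((1 : ℝ), (0 : ℝ)) σ :=
      (hasDerivAt_id σ).prodMk (hasDerivAt_const σ τ)
    exact (hg (σ, τ)).hasFDerivAt.comp_hasDerivAt σ h1
  have hderiv_t : ∀ (g : ℝ × ℝ → ℝ), Differentiable ℝ g → ∀ (σ τ : ℝ),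
      HasDerivAt (fun τ' => g (σ, τ')) (fderiv ℝ g (σ, τ) (0, 1)) τ := by
    intro g hg σ τ
    have h1 : HasDerivAt (fun τ' : ℝ => (σ, τ')) ((0 : ℝ), (1 : ℝ)) τ :=
      (hasDerivAt_const τ σ).prodMk (hasDerivAt_id τ)
    exact (hg (σ, τ)).hasFDerivAt.comp_hasDerivAt τ h1
  -- pointwise bounds by iterated derivatives
  have hnorm10 : ‖((1 : ℝ), (0 : ℝ))‖ = 1 := by simp [Prod.norm_def]
  have hnorm01 : ‖((0 : ℝ), (1 : ℝ))‖ = 1 := by simp [Prod.norm_def]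
  have hb0 : ∀ x, q x ^ 2 = ‖iteratedFDeriv ℝ 0 q x‖ ^ 2 := by
    intro x; rw [norm_iteratedFDeriv_zero, Real.norm_eq_abs, sq_abs]
  have hb1 : ∀ x, u₁ x ^ 2 ≤ ‖iteratedFDeriv ℝ 1 q x‖ ^ 2 := by
    intro x
    have h := (iteratedFDeriv ℝ 1 q x).le_opNorm (fun _ => ((1 : ℝ), 0))
    rw [iteratedFDeriv_one_apply] at h
    simp only [Finset.prod_const, Finset.card_univ, Fintype.card_fin, hnorm10, one_pow,
      mul_one, Real.norm_eq_abs] at h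
    calc u₁ x ^ 2 = |u₁ x| ^ 2 := (sq_abs _).symm
      _ ≤ ‖iteratedFDeriv ℝ 1 q x‖ ^ 2 := pow_le_pow_left₀ (abs_nonneg _) h 2
  have hb2 : ∀ x, u₂ x ^ 2 ≤ ‖iteratedFDeriv ℝ 1 q x‖ ^ 2 := by
    intro x
    have h := (iteratedFDeriv ℝ 1 q x).le_opNorm (fun _ => ((0 : ℝ), 1))
    rw [iteratedFDeriv_one_apply] at h
    simp only [Finset.prod_const, Finset.card_univ, Fintype.card_fin, hnorm01, one_pow,
      mul_one, Real.norm_eq_abs] at h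
    calc u₂ x ^ 2 = |u₂ x| ^ 2 := (sq_abs _).symm
      _ ≤ ‖iteratedFDeriv ℝ 1 q x‖ ^ 2 := pow_le_pow_left₀ (abs_nonneg _) h 2
  have hb12 : ∀ x, u₁₂ x ^ 2 ≤ ‖iteratedFDeriv ℝ 2 q x‖ ^ 2 := by
    intro x
    have hu2eq : u₁₂ x = fderiv ℝ (fderiv ℝ q) x (1, 0) (0, 1) := by
      have hda : DifferentiableAt ℝ (fderiv ℝ q) x := (hq1.differentiable (by norm_num)) x
      have hcomp : HasFDerivAt u₂
          ((ContinuousLinearMap.apply ℝ ℝ ((0 : ℝ), (1 : ℝ))).comp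
            (fderiv ℝ (fderiv ℝ q) x)) x :=
        (ContinuousLinearMap.apply ℝ ℝ ((0 : ℝ), (1 : ℝ))).hasFDerivAt.comp x hda.hasFDerivAt
      rw [hu₁₂]
      simp only [hcomp.fderiv]
      rfl
    have h := (iteratedFDeriv ℝ 2 q x).le_opNorm ![((1 : ℝ), (0 : ℝ)), ((0 : ℝ), (1 : ℝ))]
    rw [iteratedFDeriv_two_apply] at h
    have hprod : (∏ i : Fin 2, ‖(![((1 : ℝ), (0 : ℝ)), ((0 : ℝ), (1 : ℝ))]) i‖) = 1 := by
      simp [Fin.prod_univ_two, hnorm10, hnorm01]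
    rw [hprod, mul_one] at h
    simp only [Matrix.cons_val_zero, Matrix.cons_val_one, Matrix.head_cons,
      Real.norm_eq_abs] at h
    rw [← hu2eq] at h
    calc u₁₂ x ^ 2 = |u₁₂ x| ^ 2 := (sq_abs _).symm
      _ ≤ ‖iteratedFDeriv ℝ 2 q x‖ ^ 2 := pow_le_pow_left₀ (abs_nonneg _) h 2
  -- integrability helpers
  have intI : ∀ {g : ℝ → ℝ}, Continuous g → ∀ (a' b' : ℝ), IntegrableOn g (Set.Ioo a' b') := by
    intro g hg a' b'
    exact hg.integrableOn_Icc.mono_set Set.Ioo_subset_Icc_self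
  have intS : ∀ {g : ℝ × ℝ → ℝ}, Continuous g → IntegrableOn g S := by
    intro g hg
    have h1 : IntegrableOn g (Set.Icc r (r + 1 / 2) ×ˢ Set.Icc (0 : ℝ) 1) :=
      hg.continuousOn.integrableOn_compact (isCompact_Icc.prod isCompact_Icc)
    exact h1.mono_set (Set.prod_mono Set.Ioo_subset_Icc_self Set.Ioo_subset_Icc_self)
  -- product measure bookkeeping
  have hrestr : ∀ (g : ℝ × ℝ → ℝ), IntegrableOn g S →
      Integrable g ((volume.restrict I).prod (volume.restrict J)) := by
    intro g hg
    rw [Measure.prod_restrict, ← Measure.volume_eq_prod]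
    exact hg
  have fubJ : ∀ (g : ℝ × ℝ → ℝ), IntegrableOn g S →
      (∫ τ in J, ∫ σ in I, g (σ, τ)) = ∫ z in S, g z := by
    intro g hg
    rw [show (∫ z in S, g z) = ∫ z, g z ∂((volume.restrict I).prod (volume.restrict J)) by
      rw [Measure.prod_restrict, ← Measure.volume_eq_prod]]
    exact (integral_prod_symm g (hrestr g hg)).symm
  have fubI : ∀ (g : ℝ × ℝ → ℝ), IntegrableOn g S →
      (∫ σ in I, ∫ τ in J, g (σ, τ)) = ∫ z in S, g z := by
    intro g hg
    rw [show (∫ z in S, g z) = ∫ z, g z ∂((volume.restrict I).prod (volume.restrict J)) by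
      rw [Measure.prod_restrict, ← Measure.volume_eq_prod]]
    exact (integral_prod g (hrestr g hg)).symm
  have margJ : ∀ (g : ℝ × ℝ → ℝ), IntegrableOn g S →
      IntegrableOn (fun τ => ∫ σ in I, g (σ, τ)) J := by
    intro g hg
    exact (hrestr g hg).integral_prod_right
  have margI : ∀ (g : ℝ × ℝ → ℝ), IntegrableOn g S →
      IntegrableOn (fun σ => ∫ τ in J, g (σ, τ)) I := by
    intro g hg
    exact (hrestr g hg).integral_prod_left
  -- measures of strips
  have hvolI : volume.real I = 1 / 2 := by
    rw [measureReal_def, hI, Real.volume_Ioo, ENNReal.toReal_ofReal (by norm_num)]; ring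
  have hvolJ : volume.real J = 1 := by
    rw [measureReal_def, hJ, Real.volume_Ioo, ENNReal.toReal_ofReal (by norm_num)]; ring
  have hvolIfin : volume I < ⊤ := by
    rw [hI, Real.volume_Ioo]; exact ENNReal.ofReal_lt_top
  have hvolJfin : volume J < ⊤ := by
    rw [hJ, Real.volume_Ioo]; exact ENNReal.ofReal_lt_top
  -- period reduction
  set t' : ℝ := Int.fract t with ht'
  have ht'mem : t' ∈ Set.Icc (0 : ℝ) 1 := ⟨Int.fract_nonneg t, (Int.fract_lt_one t).le⟩
  have hqt : q (s, t') = q (s, t) := by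
    have hp : Function.Periodic (fun τ => q (s, τ)) 1 := fun τ => hper s τ
    have h := hp.sub_int_mul_eq (x := t) ⌊t⌋
    have ht'' : t - (⌊t⌋ : ℝ) * 1 = t' := by rw [ht']; rw [Int.fract]; ring
    rw [ht''] at h
    exact h
  set P : ℝ := q (s, t') ^ 2 with hP
  -- key quantities
  set A : ℝ := ∫ θ in J, (q (s, θ) ^ 2 + u₂ (s, θ) ^ 2) with hA
  set B : ℝ → ℝ := fun τ => ∫ σ' in I, (q (σ', τ) ^ 2 + u₁ (σ', τ) ^ 2) with hB
  set B₂ : ℝ → ℝ := fun τ => ∫ σ' in I, (u₂ (σ', τ) ^ 2 + u₁₂ (σ', τ) ^ 2) with hB₂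
  set D : ℝ → ℝ := fun σ => ∫ θ in J, (q (σ, θ) ^ 2 + u₂ (σ, θ) ^ 2) with hD
  set F : ℝ × ℝ → ℝ := fun z => q z ^ 2 + u₁ z ^ 2 + u₂ z ^ 2 + u₁₂ z ^ 2 with hF
  have hcF : Continuous F := by
    rw [hF]; fun_prop
  set M : ℝ := ∫ z in S, F z with hM
  -- integrability of the various 2D integrands on S
  have hq2S : IntegrableOn (fun z : ℝ × ℝ => q z ^ 2) S := intS (hcq.pow 2)
  have hqu1S : IntegrableOn (fun z : ℝ × ℝ => q z ^ 2 + u₁ z ^ 2) S :=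
    intS ((hcq.pow 2).add (hcu1.pow 2))
  have hqu2S : IntegrableOn (fun z : ℝ × ℝ => q z ^ 2 + u₂ z ^ 2) S :=
    intS ((hcq.pow 2).add (hcu2.pow 2))
  have hu2u12S : IntegrableOn (fun z : ℝ × ℝ => u₂ z ^ 2 + u₁₂ z ^ 2) S :=
    intS ((hcu2.pow 2).add (hcu12.pow 2))
  have hFS : IntegrableOn F S := intS hcF
  -- step 1 : P ≤ q(s,τ)² + A for τ ∈ Icc 0 1
  have step1 : ∀ τ ∈ Set.Icc (0 : ℝ) 1, P ≤ q (s, τ) ^ 2 + A :=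
    fun τ hτ => oneD (f' := fun θ => u₂ (s, θ)) (fun z => hderiv_t q hqd s z)
      (hcu2.comp (continuous_const.prodMk continuous_id)) ht'mem hτ
  -- step 2 : q(s,τ)² ≤ q(σ,τ)² + B τ for σ ∈ Icc r (r+1/2)
  have step2 : ∀ (τ : ℝ), ∀ σ ∈ Set.Icc r (r + 1 / 2),
      q (s, τ) ^ 2 ≤ q (σ, τ) ^ 2 + B τ :=
    fun τ σ hσ => oneD (f' := fun σ' => u₁ (σ', τ)) (fun z => hderiv_s q hqd τ z)
      (hcu1.comp (continuous_id.prodMk continuous_const)) ⟨hrs, hsr⟩ hσ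
  have step2' : ∀ (τ : ℝ), ∀ σ ∈ Set.Icc r (r + 1 / 2),
      u₂ (s, τ) ^ 2 ≤ u₂ (σ, τ) ^ 2 + B₂ τ :=
    fun τ σ hσ => oneD (f' := fun σ' => u₁₂ (σ', τ)) (fun z => hderiv_s u₂ hu2d τ z)
      (hcu12.comp (continuous_id.prodMk continuous_const)) ⟨hrs, hsr⟩ hσ
  -- integrate over σ ∈ I at fixed τ ∈ J : P ≤ 2 ∫_I q(·,τ)² + B τ + A
  have stepIσ : ∀ τ ∈ J, P ≤ 2 * (∫ σ in I, q (σ, τ) ^ 2) + B τ + A := by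
    intro τ hτ
    have hτ' : τ ∈ Set.Icc (0 : ℝ) 1 := Set.Ioo_subset_Icc_self hτ
    have hpt : ∀ σ ∈ I, P ≤ q (σ, τ) ^ 2 + (B τ + A) := by
      intro σ hσ
      have h1 := step1 τ hτ'
      have h2 := step2 τ σ (Set.Ioo_subset_Icc_self hσ)
      linarith
    have hcqτ : Continuous fun σ : ℝ => q (σ, τ) ^ 2 :=
      (hcq.comp (continuous_id.prodMk continuous_const)).pow 2
    have hintc : IntegrableOn (fun _ : ℝ => P) I :=
      integrableOn_const hvolIfin.ne
    have hconst : IntegrableOn (fun _ : ℝ => B τ + A) I :=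
      integrableOn_const hvolIfin.ne
    have hrhs : IntegrableOn (fun σ => q (σ, τ) ^ 2 + (B τ + A)) I :=
      (intI hcqτ r (r + 1 / 2)).add hconst
    have hmono := setIntegral_mono_on hintc hrhs measurableSet_Ioo hpt
    beta_reduce at hmono
    have e0 := integral_add (intI hcqτ r (r + 1 / 2)) hconst
    beta_reduce at e0
    rw [setIntegral_const, e0, setIntegral_const, hvolI, smul_eq_mul, smul_eq_mul] at hmono
    linarith
  -- integrate over τ ∈ J : P ≤ 2 ∬ q² + ∬ (q² + u₁²) + A
  have stepτ : P ≤ 2 * (∫ z in S, q z ^ 2) + (∫ z in S, (q z ^ 2 + u₁ z ^ 2)) + A := by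
    have hQint : IntegrableOn (fun τ => ∫ σ in I, q (σ, τ) ^ 2) J := by
      have := margJ _ hq2S; simpa using this
    have hBint : IntegrableOn B J := by
      have := margJ _ hqu1S; simpa [hB] using this
    have hintc : IntegrableOn (fun _ : ℝ => P) J :=
      integrableOn_const hvolJfin.ne
    have hconst : IntegrableOn (fun _ : ℝ => A) J :=
      integrableOn_const hvolJfin.ne
    have hrhs1 : IntegrableOn (fun τ => 2 * (∫ σ in I, q (σ, τ) ^ 2) + B τ) J :=
      (hQint.const_mul 2).add hBint
    have hrhsJ : IntegrableOn (fun τ => 2 * (∫ σ in I, q (σ, τ) ^ 2) + B τ + A) J :=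
      hrhs1.add hconst
    have hmono := setIntegral_mono_on hintc hrhsJ measurableSet_Ioo
      (fun τ hτ => stepIσ τ hτ)
    have e0 := integral_add hrhs1 hconst
    beta_reduce at e0
    have e0' := integral_add (hQint.const_mul 2) hBint
    beta_reduce at e0'
    rw [setIntegral_const, hvolJ, e0, setIntegral_const, hvolJ, e0',
      integral_const_mul 2] at hmono
    simp only [smul_eq_mul, one_mul, one_smul] at hmono
    have e1 : (∫ τ in J, ∫ σ in I, q (σ, τ) ^ 2) = ∫ z in S, q z ^ 2 := by
      have := fubJ _ hq2S; simpa using this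
    have e2 : (∫ τ in J, B τ) = ∫ z in S, (q z ^ 2 + u₁ z ^ 2) := by
      have := fubJ _ hqu1S; simpa [hB] using this
    rw [e1, e2] at hmono
    linarith
  -- bound A : A ≤ 2 ∬ (q² + u₂²) + ∬ (q² + u₁²) + ∬ (u₂² + u₁₂²)
  have stepA : A ≤ 2 * (∫ z in S, (q z ^ 2 + u₂ z ^ 2))
      + (∫ z in S, (q z ^ 2 + u₁ z ^ 2)) + (∫ z in S, (u₂ z ^ 2 + u₁₂ z ^ 2)) := by
    have hBint : IntegrableOn B J := by
      have := margJ _ hqu1S; simpa [hB] using this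
    have hB2int : IntegrableOn B₂ J := by
      have := margJ _ hu2u12S; simpa [hB₂] using this
    -- pointwise in σ : A ≤ D σ + ∫_J (B + B₂)
    have hptσ : ∀ σ ∈ I, A ≤ D σ + (∫ θ in J, (B θ + B₂ θ)) := by
      intro σ hσ
      have hσ' : σ ∈ Set.Icc r (r + 1 / 2) := Set.Ioo_subset_Icc_self hσ
      have hptθ : ∀ θ ∈ J, q (s, θ) ^ 2 + u₂ (s, θ) ^ 2
          ≤ (q (σ, θ) ^ 2 + u₂ (σ, θ) ^ 2) + (B θ + B₂ θ) := by
        intro θ _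
        have h1 := step2 θ σ hσ'
        have h2 := step2' θ σ hσ'
        linarith
      have hlhs : IntegrableOn (fun θ => q (s, θ) ^ 2 + u₂ (s, θ) ^ 2) J :=
        intI (((hcq.comp (continuous_const.prodMk continuous_id)).pow 2).add
          ((hcu2.comp (continuous_const.prodMk continuous_id)).pow 2)) 0 1
      have hrhs0 : IntegrableOn (fun θ => q (σ, θ) ^ 2 + u₂ (σ, θ) ^ 2) J :=
        intI (((hcq.comp (continuous_const.prodMk continuous_id)).pow 2).add
          ((hcu2.comp (continuous_const.prodMk continuous_id)).pow 2)) 0 1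
      have hBB : IntegrableOn (fun θ => B θ + B₂ θ) J := hBint.add hB2int
      have hrhs : IntegrableOn (fun θ => (q (σ, θ) ^ 2 + u₂ (σ, θ) ^ 2) + (B θ + B₂ θ)) J :=
        hrhs0.add hBB
      have hmono := setIntegral_mono_on hlhs hrhs measurableSet_Ioo hptθ
      beta_reduce at hmono
      have e0 := integral_add hrhs0 hBB
      beta_reduce at e0
      rw [e0] at hmono
      exact hmono
    -- integrate over σ ∈ I
    have hDint : IntegrableOn D I := by
      have := margI _ hqu2S; simpa [hD] using this
    have hintc : IntegrableOn (fun _ : ℝ => A) I :=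
      integrableOn_const hvolIfin.ne
    have hconst : IntegrableOn (fun _ : ℝ => (∫ θ in J, (B θ + B₂ θ))) I :=
      integrableOn_const hvolIfin.ne
    have hrhsI : IntegrableOn (fun σ => D σ + (∫ θ in J, (B θ + B₂ θ))) I :=
      hDint.add hconst
    have hmono := setIntegral_mono_on hintc hrhsI measurableSet_Ioo hptσ
    have e0 := integral_add hDint hconst
    beta_reduce at e0
    rw [setIntegral_const, e0, setIntegral_const, hvolI, smul_eq_mul, smul_eq_mul] at hmono
    have e3 : (∫ σ in I, D σ) = ∫ z in S, (q z ^ 2 + u₂ z ^ 2) := by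
      have := fubI _ hqu2S; simpa [hD] using this
    have e4 : (∫ θ in J, (B θ + B₂ θ)) = (∫ z in S, (q z ^ 2 + u₁ z ^ 2))
        + (∫ z in S, (u₂ z ^ 2 + u₁₂ z ^ 2)) := by
      rw [integral_add hBint hB2int]
      have e5 : (∫ τ in J, B τ) = ∫ z in S, (q z ^ 2 + u₁ z ^ 2) := by
        have := fubJ _ hqu1S; simpa [hB] using this
      have e6 : (∫ τ in J, B₂ τ) = ∫ z in S, (u₂ z ^ 2 + u₁₂ z ^ 2) := by
        have := fubJ _ hu2u12S; simpa [hB₂] using this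
      rw [e5, e6]
    rw [e3, e4] at hmono
    linarith
  -- each partial sum is at most M
  have hsubM : ∀ (g : ℝ × ℝ → ℝ), IntegrableOn g S → (∀ z, g z ≤ F z) →
      (∫ z in S, g z) ≤ M := by
    intro g hg hle
    exact setIntegral_mono_on hg hFS (measurableSet_Ioo.prod measurableSet_Ioo)
      (fun z _ => hle z)
  have hM1 : (∫ z in S, q z ^ 2) ≤ M := hsubM _ hq2S (fun z => by
    have := sq_nonneg (u₁ z); have := sq_nonneg (u₂ z); have := sq_nonneg (u₁₂ z)
    simp only [hF]; nlinarith)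
  have hM2 : (∫ z in S, (q z ^ 2 + u₁ z ^ 2)) ≤ M := hsubM _ hqu1S (fun z => by
    have := sq_nonneg (u₂ z); have := sq_nonneg (u₁₂ z)
    simp only [hF]; nlinarith)
  have hM3 : (∫ z in S, (q z ^ 2 + u₂ z ^ 2)) ≤ M := hsubM _ hqu2S (fun z => by
    have := sq_nonneg (u₁ z); have := sq_nonneg (u₁₂ z)
    simp only [hF]; nlinarith)
  have hM4 : (∫ z in S, (u₂ z ^ 2 + u₁₂ z ^ 2)) ≤ M := hsubM _ hu2u12S (fun z => by
    have := sq_nonneg (q z); have := sq_nonneg (u₁ z)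
    simp only [hF]; nlinarith)
  have hPM : P ≤ 7 * M := by linarith
  -- pass to iterated derivative norms
  set G : ℝ × ℝ → ℝ := fun z => ‖iteratedFDeriv ℝ 0 q z‖ ^ 2 + ‖iteratedFDeriv ℝ 1 q z‖ ^ 2
    + ‖iteratedFDeriv ℝ 2 q z‖ ^ 2 with hGdef
  have hcG : Continuous G := by
    rw [hGdef]
    have h0 : Continuous (iteratedFDeriv ℝ 0 q) := hq2.continuous_iteratedFDeriv (by norm_num)
    have h1 : Continuous (iteratedFDeriv ℝ 1 q) := hq2.continuous_iteratedFDeriv (by norm_num)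
    have h2 : Continuous (iteratedFDeriv ℝ 2 q) := hq2.continuous_iteratedFDeriv (by norm_num)
    fun_prop
  have hFG : ∀ z, F z ≤ 2 * G z := by
    intro z
    have h0 := hb0 z
    have h1 := hb1 z
    have h2 := hb2 z
    have h12 := hb12 z
    have hn0 := sq_nonneg ‖iteratedFDeriv ℝ 0 q z‖
    have hn1 := sq_nonneg ‖iteratedFDeriv ℝ 1 q z‖
    have hn2 := sq_nonneg ‖iteratedFDeriv ℝ 2 q z‖
    simp only [hF, hGdef]
    nlinarith
  have hMG : M ≤ 2 * ∫ z in S, G z := by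
    have h := setIntegral_mono_on hFS ((intS hcG).const_mul 2)
      (measurableSet_Ioo.prod measurableSet_Ioo) (fun z _ => hFG z)
    rw [integral_const_mul] at h
    exact h
  have hPG : P ≤ 14 * ∫ z in S, G z := by linarith
  -- weights
  have hWw : ∀ z ∈ S, Real.exp (-2 * δ * |s - R / 2|)
      ≤ Real.exp δ * Real.exp (-2 * δ * |z.1 - R / 2|) := by
    intro z hz
    rw [← Real.exp_add]
    apply Real.exp_le_exp.2
    have hz1 : z.1 ∈ I := hz.1
    have hd1 : |z.1 - s| ≤ 1 / 2 := by
      rw [abs_le]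
      exact ⟨by linarith [hz1.1], by linarith [hz1.2]⟩
    have habs : |z.1 - R / 2| - |s - R / 2| ≤ |z.1 - s| := by
      have h := abs_sub_abs_le_abs_sub (z.1 - R / 2) (s - R / 2)
      have he : z.1 - R / 2 - (s - R / 2) = z.1 - s := by ring
      rw [he] at h
      exact h
    nlinarith
  -- weighted integrand on Ω
  set f0 : ℝ × ℝ → ℝ :=
    fun x => ‖iteratedFDeriv ℝ 0 q x‖ ^ 2 * Real.exp (-2 * δ * |x.1 - R / 2|) with hf0
  set f1 : ℝ × ℝ → ℝ :=
    fun x => ‖iteratedFDeriv ℝ 1 q x‖ ^ 2 * Real.exp (-2 * δ * |x.1 - R / 2|) with hf1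
  set f2 : ℝ × ℝ → ℝ :=
    fun x => ‖iteratedFDeriv ℝ 2 q x‖ ^ 2 * Real.exp (-2 * δ * |x.1 - R / 2|) with hf2
  have hint0 : IntegrableOn f0 Ω := hint 0 (by norm_num)
  have hint1 : IntegrableOn f1 Ω := hint 1 (by norm_num)
  have hint2 : IntegrableOn f2 Ω := hint 2 (by norm_num)
  have hGwΩ : IntegrableOn (fun z => G z * Real.exp (-2 * δ * |z.1 - R / 2|)) Ω := by
    have h : IntegrableOn (fun z => f0 z + f1 z + f2 z) Ω := (hint0.add hint1).add hint2
    refine h.congr_fun (fun z _ => ?_) (measurableSet_Ioo.prod measurableSet_Ioo)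
    simp only [hf0, hf1, hf2, hGdef]
    ring
  have hGwS : IntegrableOn (fun z => G z * Real.exp (-2 * δ * |z.1 - R / 2|)) S :=
    hGwΩ.mono_set hSΩ
  -- main weighted estimate
  have key2 : Real.exp (-2 * δ * |s - R / 2|) * P
      ≤ 14 * Real.exp δ * ∫ z in Ω, G z * Real.exp (-2 * δ * |z.1 - R / 2|) := by
    have hW0 : 0 ≤ Real.exp (-2 * δ * |s - R / 2|) := (Real.exp_pos _).le
    have c1 : Real.exp (-2 * δ * |s - R / 2|) * P
        ≤ 14 * ∫ z in S, G z * Real.exp (-2 * δ * |s - R / 2|) := by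
      rw [integral_mul_const]
      nlinarith [hPG]
    have c2 : (∫ z in S, G z * Real.exp (-2 * δ * |s - R / 2|))
        ≤ ∫ z in S, Real.exp δ * (G z * Real.exp (-2 * δ * |z.1 - R / 2|)) := by
      refine setIntegral_mono_on ((intS hcG).mul_const _) (hGwS.const_mul _)
        (measurableSet_Ioo.prod measurableSet_Ioo) (fun z hz => ?_)
      have hGz : 0 ≤ G z := by
        simp only [hGdef]; positivity
      have := hWw z hz
      nlinarith
    have c3 : (∫ z in S, Real.exp δ * (G z * Real.exp (-2 * δ * |z.1 - R / 2|)))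
        ≤ Real.exp δ * ∫ z in Ω, G z * Real.exp (-2 * δ * |z.1 - R / 2|) := by
      rw [integral_const_mul]
      refine mul_le_mul_of_nonneg_left ?_ (Real.exp_pos _).le
      refine setIntegral_mono_set hGwΩ (ae_of_all _ (fun z => ?_)) (ae_of_all _ hSΩ)
      have hGz : 0 ≤ G z := by simp only [hGdef]; positivity
      positivity
    calc Real.exp (-2 * δ * |s - R / 2|) * P
        ≤ 14 * ∫ z in S, G z * Real.exp (-2 * δ * |s - R / 2|) := c1
      _ ≤ 14 * ∫ z in S, Real.exp δ * (G z * Real.exp (-2 * δ * |z.1 - R / 2|)) := by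
          refine mul_le_mul_of_nonneg_left c2 (by norm_num)
      _ ≤ 14 * (Real.exp δ * ∫ z in Ω, G z * Real.exp (-2 * δ * |z.1 - R / 2|)) := by
          refine mul_le_mul_of_nonneg_left c3 (by norm_num)
      _ = 14 * Real.exp δ * ∫ z in Ω, G z * Real.exp (-2 * δ * |z.1 - R / 2|) := by ring
  -- identify zNormSq
  have hZeq : zNormSq 2 δ R q = ∫ z in Ω, G z * Real.exp (-2 * δ * |z.1 - R / 2|) := by
    have hsum : zNormSq 2 δ R q = (∫ z in Ω, f0 z) + (∫ z in Ω, f1 z) + (∫ z in Ω, f2 z) := by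
      rw [zNormSq]
      rw [Finset.sum_range_succ, Finset.sum_range_succ, Finset.sum_range_one]
    have h01 : IntegrableOn (fun z => f0 z + f1 z) Ω := hint0.add hint1
    rw [hsum, ← integral_add hint0 hint1, ← integral_add h01 hint2]
    refine integral_congr_ae (Eventually.of_forall (fun z => ?_))
    simp only [hf0, hf1, hf2, hGdef]
    ring
  have hZnn : 0 ≤ zNormSq 2 δ R q := by
    rw [hZeq]
    refine integral_nonneg (fun z => ?_)
    have hGz : 0 ≤ G z := by simp only [hGdef]; positivity
    positivity
  -- finish
  have hL0 : 0 ≤ Real.exp (-δ * |s - R / 2|) * |q (s, t)| := by positivity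
  have hsq : (Real.exp (-δ * |s - R / 2|) * |q (s, t)|) ^ 2
      ≤ 14 * Real.exp δ * zNormSq 2 δ R q := by
    have hexp2 : (Real.exp (-δ * |s - R / 2|)) ^ 2 = Real.exp (-2 * δ * |s - R / 2|) := by
      rw [sq, ← Real.exp_add]
      ring_nf
    have habs2 : |q (s, t)| ^ 2 = P := by
      rw [sq_abs, hP, hqt]
    calc (Real.exp (-δ * |s - R / 2|) * |q (s, t)|) ^ 2
        = Real.exp (-2 * δ * |s - R / 2|) * P := by
          rw [mul_pow, hexp2, habs2]
      _ ≤ 14 * Real.exp δ * ∫ z in Ω, G z * Real.exp (-2 * δ * |z.1 - R / 2|) := key2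
      _ = 14 * Real.exp δ * zNormSq 2 δ R q := by rw [hZeq]
  calc Real.exp (-δ * |s - R / 2|) * |q (s, t)|
      = Real.sqrt ((Real.exp (-δ * |s - R / 2|) * |q (s, t)|) ^ 2) :=
        (Real.sqrt_sq hL0).symm
    _ ≤ Real.sqrt (14 * Real.exp δ * zNormSq 2 δ R q) := Real.sqrt_le_sqrt hsq
    _ = Real.sqrt (14 * Real.exp δ) * Real.sqrt (zNormSq 2 δ R q) := by
        rw [Real.sqrt_mul (by positivity)]
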